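/- Let G and H be connected finite simple graphs of order n₁ ≥ 2 and n₂ ≥ 2, with maximum degrees Δ₁ and Δ₂, respectively. If Δ₁ = n₁ − 1 and Δ₂ = n₂ − 1, then dim_s(G + H) = dim_s(G) + dim_s(H) + 1. -/

import Mathlib

open SimpleGraph

/-- A vertex `w` strongly resolves the pair `u`, `v` if `v` lies on some shortest `u`–`w`
path or `u` lies on some shortest `v`–`w` path. -/
def StronglyResolves {V : Type*} (G : SimpleGraph V) (w u v : V) : Prop :=
  G.dist u w = G.dist u v + G.dist v w ∨ G.dist v w = G.dist v u + G.dist u w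

/-- `S` is a strong resolving set for `G` if every pair of distinct vertices is strongly
resolved by some vertex of `S`. -/
def IsStrongResolvingSet {V : Type*} (G : SimpleGraph V) (S : Set V) : Prop :=
  ∀ u v : V, u ≠ v → ∃ w ∈ S, StronglyResolves G w u v

/-- The strong metric dimension: the minimum cardinality of a strong resolving set. -/
noncomputable def strongDim {V : Type*} (G : SimpleGraph V) [Fintype V] : ℕ :=
  sInf {k | ∃ S : Finset V, IsStrongResolvingSet G ↑S ∧ S.card = k}

/-- The closed neighborhood of a vertex. -/
def closedNbhd {V : Type*} (G : SimpleGraph V) (v : V) : Set V :=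
  insert v (G.neighborSet v)

/-- A twin-free clique: a clique containing no pair of true twins. -/
def IsTwinFreeClique {V : Type*} (G : SimpleGraph V) (X : Finset V) : Prop :=
  G.IsClique ↑X ∧ ∀ u ∈ X, ∀ v ∈ X, u ≠ v → closedNbhd G u ≠ closedNbhd G v

/-- The twin-free clique number: maximum cardinality of a twin-free clique. -/
noncomputable def twinFreeCliqueNum {V : Type*} (G : SimpleGraph V) [Fintype V] : ℕ :=
  sSup {k | ∃ X : Finset V, IsTwinFreeClique G X ∧ X.card = k}

/-- Adjacency relation of the join of two graphs. -/
def joinAdj {V W : Type*} (G : SimpleGraph V) (H : SimpleGraph W) :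
    V ⊕ W → V ⊕ W → Prop
  | Sum.inl a, Sum.inl b => G.Adj a b
  | Sum.inr a, Sum.inr b => H.Adj a b
  | Sum.inl _, Sum.inr _ => True
  | Sum.inr _, Sum.inl _ => True

/-- The join `G + H`: disjoint union of `G` and `H` plus all edges between them. -/
def joinGraph {V W : Type*} (G : SimpleGraph V) (H : SimpleGraph W) :
    SimpleGraph (V ⊕ W) where
  Adj := joinAdj G H
  symm := by
    constructor
    rintro (a | a) (b | b) h
    · exact G.adj_symm h
    · trivial
    · trivial
    · exact H.adj_symm h
  loopless := by
    constructor
    rintro (a | a) h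
    · exact G.loopless.irrefl a h
    · exact H.loopless.irrefl a h

/-- Adjacency relation of the corona product `G ⊙ H`. -/
def coronaAdj {V W : Type*} (G : SimpleGraph V) (H : SimpleGraph W) :
    V ⊕ V × W → V ⊕ V × W → Prop
  | Sum.inl a, Sum.inl b => G.Adj a b
  | Sum.inr p, Sum.inr q => p.1 = q.1 ∧ H.Adj p.2 q.2
  | Sum.inl a, Sum.inr q => a = q.1
  | Sum.inr p, Sum.inl b => p.1 = b

/-- The corona product `G ⊙ H`: one copy of `G` and one copy of `H` for each vertex of
`G`, with the `i`-th vertex of `G` joined to every vertex of the `i`-th copy of `H`. -/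
def corona {V W : Type*} (G : SimpleGraph V) (H : SimpleGraph W) :
    SimpleGraph (V ⊕ V × W) where
  Adj := coronaAdj G H
  symm := by
    constructor
    rintro (a | p) (b | q) h
    · exact G.adj_symm h
    · exact h.symm
    · exact h.symm
    · exact ⟨h.1.symm, H.adj_symm h.2⟩
  loopless := by
    constructor
    rintro (a | p) h
    · exact G.loopless.irrefl a h
    · exact H.loopless.irrefl p.2 h.2

/-- The disjoint union of copies of `H`, one copy for each element of `V`. -/
def copies (V : Type*) {W : Type*} (H : SimpleGraph W) : SimpleGraph (V × W) where
  Adj p q := p.1 = q.1 ∧ H.Adj p.2 q.2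
  symm := ⟨fun _ _ h => ⟨h.1.symm, h.2.symm⟩⟩
  loopless := ⟨fun p h => H.loopless.irrefl p.2 h.2⟩

/-- The algebraic connectivity: the second smallest eigenvalue (with multiplicity,
in nondecreasing order) of the Laplacian matrix. -/
noncomputable def algebraicConnectivity {V : Type*} (G : SimpleGraph V) [Fintype V]
    [DecidableEq V] [DecidableRel G.Adj] : ℝ :=
  (((Finset.univ.val.map ((G.posSemidef_lapMatrix ℝ).isHermitian.eigenvalues)).sort
    (· ≤ ·)).getD 1 0)

section Aux

variable {V : Type*} {G : SimpleGraph V}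

lemma mem_closedNbhd {u x : V} : x ∈ closedNbhd G u ↔ x = u ∨ G.Adj u x := by
  simp [closedNbhd]

lemma stronglyResolves_left (G : SimpleGraph V) (u v : V) : StronglyResolves G u u v :=
  Or.inr (by simp [SimpleGraph.dist_self])

lemma stronglyResolves_right (G : SimpleGraph V) (u v : V) : StronglyResolves G v u v :=
  Or.inl (by simp [SimpleGraph.dist_self])

lemma stronglyResolves_of_adj (hconn : G.Connected) (h2 : ∀ u v : V, G.dist u v ≤ 2)
    {u v w : V} (huv : G.Adj u v) (hvw : G.Adj v w) (hw : ¬ G.Adj u w) (hwu : w ≠ u) :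
    StronglyResolves G w u v := by
  left
  have h1 : G.dist u v = 1 := SimpleGraph.dist_eq_one_iff_adj.mpr huv
  have hvw1 : G.dist v w = 1 := SimpleGraph.dist_eq_one_iff_adj.mpr hvw
  have h0 : G.dist u w ≠ 0 := fun h => hwu (hconn.dist_eq_zero_iff.mp h).symm
  have hne1 : G.dist u w ≠ 1 := fun h => hw (SimpleGraph.dist_eq_one_iff_adj.mp h)
  have := h2 u w
  omega

/-- complement of a strong resolving set is a twin-free clique (diam ≤ 2). -/
lemma tfc_of_srs [Fintype V] [DecidableEq V] (hconn : G.Connected)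
    (h2 : ∀ u v : V, G.dist u v ≤ 2) {S : Finset V} (hS : IsStrongResolvingSet G ↑S) :
    IsTwinFreeClique G (Finset.univ \ S) := by
  constructor
  · intro u hu v hv hne
    simp only [Finset.coe_sdiff, Finset.coe_univ, Set.mem_diff, Finset.mem_coe] at hu hv
    by_contra hadj
    have hd2 : G.dist u v = 2 := by
      have h0 : G.dist u v ≠ 0 := fun h => hne (hconn.dist_eq_zero_iff.mp h)
      have h1 : G.dist u v ≠ 1 := fun h => hadj (SimpleGraph.dist_eq_one_iff_adj.mp h)
      have := h2 u v
      omega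
    obtain ⟨w, hwS, hres⟩ := hS u v hne
    rcases hres with h | h
    · have : G.dist v w = 0 := by have := h2 u w; omega
      exact hv.2 ((hconn.dist_eq_zero_iff.mp this) ▸ hwS)
    · have : G.dist u w = 0 := by
        rw [show G.dist v u = G.dist u v from SimpleGraph.dist_comm, hd2] at h
        have := h2 v w; omega
      exact hu.2 ((hconn.dist_eq_zero_iff.mp this) ▸ hwS)
  · intro u hu v hv hne heq
    simp only [Finset.mem_sdiff, Finset.mem_univ, true_and] at hu hv
    have hadj : G.Adj u v := by
      have : v ∈ closedNbhd G u := heq ▸ mem_closedNbhd.mpr (Or.inl rfl)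
      rcases mem_closedNbhd.mp this with h | h
      · exact absurd h.symm hne
      · exact h
    obtain ⟨w, hwS, hres⟩ := hS u v hne
    have hwu : w ≠ u := fun h => hu (h ▸ hwS)
    have hwv : w ≠ v := fun h => hv (h ▸ hwS)
    have h1 : G.dist u v = 1 := SimpleGraph.dist_eq_one_iff_adj.mpr hadj
    have key : ∀ a b : V, w ≠ a → closedNbhd G a = closedNbhd G b → G.Adj b w → G.Adj a w := by
      intro a b hwa hab hbw
      have : w ∈ closedNbhd G a := hab ▸ mem_closedNbhd.mpr (Or.inr hbw)
      rcases mem_closedNbhd.mp this with h | h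
      · exact absurd h hwa
      · exact h
    rcases hres with h | h
    · have hvw : G.dist v w = 1 := by
        have h0 : G.dist v w ≠ 0 := fun h' => hwv (hconn.dist_eq_zero_iff.mp h').symm
        have := h2 u w; omega
      have huw : G.dist u w ≠ 1 := by omega
      exact huw (SimpleGraph.dist_eq_one_iff_adj.mpr
        (key u v hwu heq (SimpleGraph.dist_eq_one_iff_adj.mp hvw)))
    · have huw : G.dist u w = 1 := by
        have h0 : G.dist u w ≠ 0 := fun h' => hwu (hconn.dist_eq_zero_iff.mp h').symm
        rw [show G.dist v u = G.dist u v from SimpleGraph.dist_comm, h1] at h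
        have := h2 v w; omega
      have hvw : G.dist v w ≠ 1 := by rw [show G.dist v u = G.dist u v from SimpleGraph.dist_comm, h1] at h; omega
      exact hvw (SimpleGraph.dist_eq_one_iff_adj.mpr
        (key v u hwv heq.symm (SimpleGraph.dist_eq_one_iff_adj.mp huw)))

/-- complement of a twin-free clique is a strong resolving set (diam ≤ 2). -/
lemma srs_of_tfc [Fintype V] [DecidableEq V] (hconn : G.Connected)
    (h2 : ∀ u v : V, G.dist u v ≤ 2) {X : Finset V} (hX : IsTwinFreeClique G X) :
    IsStrongResolvingSet G ↑(Finset.univ \ X) := by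
  intro u v hne
  by_cases hu : u ∈ X
  · by_cases hv : v ∈ X
    · have hadj : G.Adj u v := hX.1 (Finset.mem_coe.mpr hu) (Finset.mem_coe.mpr hv) hne
      have hne' := hX.2 u hu v hv hne
      have : ¬ ∀ w, w ∈ closedNbhd G u ↔ w ∈ closedNbhd G v := fun h => hne' (Set.ext h)
      push_neg at this
      obtain ⟨w, hw⟩ := this
      have hwX : ∀ a : V, a ∈ X → w ∈ closedNbhd G a → w ∉ closedNbhd G u ∨ w ∉ closedNbhd G v → w ∈ (Finset.univ \ X : Finset V) := by
        intro a ha hwa hor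
        simp only [Finset.mem_sdiff, Finset.mem_univ, true_and]
        intro hwX'
        rcases hor with h | h
        · exact h (mem_closedNbhd.mpr (Or.inr (hX.1 (Finset.mem_coe.mpr hu) (Finset.mem_coe.mpr hwX')
            (by rintro rfl; exact h (mem_closedNbhd.mpr (Or.inl rfl))))))
        · exact h (mem_closedNbhd.mpr (Or.inr (hX.1 (Finset.mem_coe.mpr hv) (Finset.mem_coe.mpr hwX')
            (by rintro rfl; exact h (mem_closedNbhd.mpr (Or.inl rfl))))))
      rcases hw with ⟨h1, h2'⟩ | ⟨h2', h1⟩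
      · -- w ∈ N[u], w ∉ N[v]
        have hwu : G.Adj u w := by
          rcases mem_closedNbhd.mp h1 with h | h
          · subst h; exact absurd (mem_closedNbhd.mpr (Or.inr hadj.symm)) h2'
          · exact h
        have hwv : ¬ G.Adj v w := fun h => h2' (mem_closedNbhd.mpr (Or.inr h))
        have hwnv : w ≠ v := fun h => h2' (h ▸ mem_closedNbhd.mpr (Or.inl rfl))
        refine ⟨w, Finset.mem_coe.mpr (hwX u hu h1 (Or.inr h2')), ?_⟩
        exact Or.symm (stronglyResolves_of_adj hconn h2 hadj.symm hwu hwv hwnv)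
      · -- w ∈ N[v], w ∉ N[u]
        have hwv : G.Adj v w := by
          rcases mem_closedNbhd.mp h1 with h | h
          · subst h; exact absurd (mem_closedNbhd.mpr (Or.inr hadj)) h2'
          · exact h
        have hwu : ¬ G.Adj u w := fun h => h2' (mem_closedNbhd.mpr (Or.inr h))
        have hwnu : w ≠ u := fun h => h2' (h ▸ mem_closedNbhd.mpr (Or.inl rfl))
        exact ⟨w, Finset.mem_coe.mpr (hwX v hv h1 (Or.inl h2')),
          stronglyResolves_of_adj hconn h2 hadj hwv hwu hwnu⟩
    · exact ⟨v, by simp [hv], stronglyResolves_right G u v⟩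
  · exact ⟨u, by simp [hu], stronglyResolves_left G u v⟩

end Aux
section Aux2

variable {V : Type*} {G : SimpleGraph V}

lemma tfc_singleton (v : V) : IsTwinFreeClique G {v} := by
  constructor
  · simp [SimpleGraph.isClique_iff, Set.Pairwise]
  · intro u hu w hw hne
    simp only [Finset.mem_singleton] at hu hw
    exact absurd (hu.trans hw.symm) hne

lemma srs_univ (G : SimpleGraph V) [Fintype V] :
    IsStrongResolvingSet G ↑(Finset.univ : Finset V) :=
  fun u v _ => ⟨u, by simp, stronglyResolves_left G u v⟩

lemma tfc_bddAbove (G : SimpleGraph V) [Fintype V] :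
    BddAbove {k | ∃ X : Finset V, IsTwinFreeClique G X ∧ X.card = k} := by
  refine ⟨Fintype.card V, ?_⟩
  rintro k ⟨X, _, rfl⟩
  exact Finset.card_le_univ X

lemma tfc_le_card (G : SimpleGraph V) [Fintype V] :
    twinFreeCliqueNum G ≤ Fintype.card V :=
by
  apply csSup_le'
  rintro k ⟨X, _, rfl⟩
  exact Finset.card_le_univ X

lemma le_tfc {k : ℕ} (G : SimpleGraph V) [Fintype V] {X : Finset V}
    (hX : IsTwinFreeClique G X) (hk : X.card = k) : k ≤ twinFreeCliqueNum G :=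
  le_csSup (tfc_bddAbove G) ⟨X, hX, hk⟩

lemma strongDim_add_tfc (G : SimpleGraph V) [Fintype V] (hconn : G.Connected)
    (h2 : ∀ u v : V, G.dist u v ≤ 2) :
    strongDim G + twinFreeCliqueNum G = Fintype.card V := by
  classical
  have hne : Nonempty V := hconn.nonempty
  obtain ⟨v0⟩ := hne
  -- the TFC set
  have htfc_mem : twinFreeCliqueNum G ∈ {k | ∃ X : Finset V, IsTwinFreeClique G X ∧ X.card = k} :=
    Nat.sSup_mem ⟨1, {v0}, tfc_singleton v0, Finset.card_singleton v0⟩ (tfc_bddAbove G)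
  obtain ⟨Xmax, hXmax, hXcard⟩ := htfc_mem
  have hsrs_mem : strongDim G ∈ {k | ∃ S : Finset V, IsStrongResolvingSet G ↑S ∧ S.card = k} :=
    Nat.sInf_mem ⟨Fintype.card V, Finset.univ, srs_univ G, Finset.card_univ⟩
  obtain ⟨Smin, hSmin, hScard⟩ := hsrs_mem
  -- upper bound on strongDim
  have hub : strongDim G ≤ Fintype.card V - twinFreeCliqueNum G := by
    have : IsStrongResolvingSet G ↑(Finset.univ \ Xmax) := srs_of_tfc hconn h2 hXmax
    have hcard : (Finset.univ \ Xmax).card = Fintype.card V - twinFreeCliqueNum G := by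
      rw [Finset.card_sdiff_of_subset (Finset.subset_univ _), Finset.card_univ, hXcard]
    exact Nat.sInf_le ⟨_, this, hcard⟩
  -- lower bound
  have hlb : Fintype.card V - strongDim G ≤ twinFreeCliqueNum G := by
    have := tfc_of_srs hconn h2 hSmin
    refine le_tfc G this ?_
    rw [Finset.card_sdiff_of_subset (Finset.subset_univ _), Finset.card_univ, hScard]
  have h1 : twinFreeCliqueNum G ≤ Fintype.card V := tfc_le_card G
  have h2' : strongDim G ≤ Fintype.card V := by
    rw [← hScard]; exact Finset.card_le_univ _
  omega

end Aux2
section Aux3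

variable {V W : Type*} {G : SimpleGraph V} {H : SimpleGraph W}

lemma closedNbhd_eq_univ_iff {c : V} :
    closedNbhd G c = Set.univ ↔ ∀ x, x ≠ c → G.Adj c x := by
  constructor
  · intro h x hx
    rcases mem_closedNbhd.mp (h ▸ Set.mem_univ x) with h' | h'
    · exact absurd h' hx
    · exact h'
  · intro h; ext x; simp only [Set.mem_univ, iff_true]
    by_cases hx : x = c
    · exact mem_closedNbhd.mpr (Or.inl hx)
    · exact mem_closedNbhd.mpr (Or.inr (h x hx))

lemma dist_le_two_of_dom (G : SimpleGraph V) {c : V} (hc : ∀ x, x ≠ c → G.Adj c x) :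
    ∀ u v : V, G.dist u v ≤ 2 := by
  intro u v
  by_cases huv : u = v
  · subst huv; simp [SimpleGraph.dist_self]
  by_cases hadj : G.Adj u v
  · rw [SimpleGraph.dist_eq_one_iff_adj.mpr hadj]; omega
  · have huc : u ≠ c := by rintro rfl; exact hadj (hc v (Ne.symm huv))
    have hvc : v ≠ c := by rintro rfl; exact hadj ((hc u huc).symm)
    simpa using SimpleGraph.dist_le
      (SimpleGraph.Walk.cons ((hc u huc).symm)
        (SimpleGraph.Walk.cons (hc v hvc) SimpleGraph.Walk.nil))

lemma exists_dom (G : SimpleGraph V) [Fintype V] [DecidableEq V] [DecidableRel G.Adj]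
    (hn : 1 ≤ Fintype.card V) (hd : G.maxDegree = Fintype.card V - 1) :
    ∃ c : V, ∀ x, x ≠ c → G.Adj c x := by
  have : Nonempty V := Fintype.card_pos_iff.mp hn
  obtain ⟨c, hc⟩ := G.exists_maximal_degree_vertex
  refine ⟨c, fun x hx => ?_⟩
  have hdeg : G.degree c = Fintype.card V - 1 := by rw [← hc, hd]
  have hsub : G.neighborFinset c ⊆ Finset.univ.erase c := by
    intro y hy
    rw [Finset.mem_erase]
    exact ⟨fun h => G.loopless.irrefl c (h ▸ ((SimpleGraph.mem_neighborFinset G c y).mp hy)), Finset.mem_univ y⟩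
  have hcard : (Finset.univ.erase c).card = Fintype.card V - 1 := by
    rw [Finset.card_erase_of_mem (Finset.mem_univ c), Finset.card_univ]
  have heq : G.neighborFinset c = Finset.univ.erase c :=
    Finset.eq_of_subset_of_card_le hsub (by
      rw [hcard]
      exact le_of_eq hdeg.symm)
  have : x ∈ G.neighborFinset c := heq ▸ Finset.mem_erase.mpr ⟨hx, Finset.mem_univ x⟩
  exact (SimpleGraph.mem_neighborFinset G c x).mp this

lemma join_connected [Nonempty V] [Nonempty W] : (joinGraph G H).Connected := by
  rw [SimpleGraph.connected_iff]
  refine ⟨?_, inferInstance⟩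
  intro a b
  obtain ⟨v0⟩ := ‹Nonempty V›; obtain ⟨w0⟩ := ‹Nonempty W›
  rcases a with a | a <;> rcases b with b | b
  · exact (SimpleGraph.Adj.reachable
      (show (joinGraph G H).Adj (Sum.inl a) (Sum.inr w0) from trivial)).trans
      (SimpleGraph.Adj.reachable (show (joinGraph G H).Adj (Sum.inr w0) (Sum.inl b) from trivial))
  · exact SimpleGraph.Adj.reachable trivial
  · exact SimpleGraph.Adj.reachable trivial
  · exact (SimpleGraph.Adj.reachable
      (show (joinGraph G H).Adj (Sum.inr a) (Sum.inl v0) from trivial)).trans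
      (SimpleGraph.Adj.reachable (show (joinGraph G H).Adj (Sum.inl v0) (Sum.inr b) from trivial))

lemma join_dist_le_two [Nonempty V] [Nonempty W] :
    ∀ a b : V ⊕ W, (joinGraph G H).dist a b ≤ 2 := by
  intro a b
  by_cases hab : a = b
  · subst hab; simp [SimpleGraph.dist_self]
  obtain ⟨v0⟩ := ‹Nonempty V›; obtain ⟨w0⟩ := ‹Nonempty W›
  rcases a with a | a <;> rcases b with b | b
  · simpa using SimpleGraph.dist_le
      (SimpleGraph.Walk.cons (show (joinGraph G H).Adj (Sum.inl a) (Sum.inr w0) from trivial)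
        (SimpleGraph.Walk.cons (show (joinGraph G H).Adj (Sum.inr w0) (Sum.inl b) from trivial)
          SimpleGraph.Walk.nil))
  · have := SimpleGraph.dist_le
      (SimpleGraph.Walk.cons (show (joinGraph G H).Adj (Sum.inl a) (Sum.inr b) from trivial)
        SimpleGraph.Walk.nil)
    simp at this; omega
  · have := SimpleGraph.dist_le
      (SimpleGraph.Walk.cons (show (joinGraph G H).Adj (Sum.inr a) (Sum.inl b) from trivial)
        SimpleGraph.Walk.nil)
    simp at this; omega
  · simpa using SimpleGraph.dist_le
      (SimpleGraph.Walk.cons (show (joinGraph G H).Adj (Sum.inr a) (Sum.inl v0) from trivial)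
        (SimpleGraph.Walk.cons (show (joinGraph G H).Adj (Sum.inl v0) (Sum.inr b) from trivial)
          SimpleGraph.Walk.nil))

lemma inl_mem_closedNbhd_inl {u x : V} :
    (Sum.inl x : V ⊕ W) ∈ closedNbhd (joinGraph G H) (Sum.inl u) ↔ x ∈ closedNbhd G u := by
  simp only [mem_closedNbhd, Sum.inl.injEq]
  exact or_congr Iff.rfl Iff.rfl

lemma inr_mem_closedNbhd_inr {u x : W} :
    (Sum.inr x : V ⊕ W) ∈ closedNbhd (joinGraph G H) (Sum.inr u) ↔ x ∈ closedNbhd H u := by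
  simp only [mem_closedNbhd, Sum.inr.injEq]
  exact or_congr Iff.rfl Iff.rfl

lemma inr_mem_closedNbhd_inl {u : V} (y : W) :
    (Sum.inr y : V ⊕ W) ∈ closedNbhd (joinGraph G H) (Sum.inl u) :=
  mem_closedNbhd.mpr (Or.inr trivial)

lemma inl_mem_closedNbhd_inr {v : W} (x : V) :
    (Sum.inl x : V ⊕ W) ∈ closedNbhd (joinGraph G H) (Sum.inr v) :=
  mem_closedNbhd.mpr (Or.inr trivial)

lemma closedNbhd_join_inl_eq_inl {u v : V} :
    closedNbhd (joinGraph G H) (Sum.inl u) = closedNbhd (joinGraph G H) (Sum.inl v) ↔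
      closedNbhd G u = closedNbhd G v := by
  constructor
  · intro h; ext x
    rw [← inl_mem_closedNbhd_inl (H := H), h, inl_mem_closedNbhd_inl]
  · intro h; ext (x | y)
    · rw [inl_mem_closedNbhd_inl, h, ← inl_mem_closedNbhd_inl (H := H)]
    · exact iff_of_true (inr_mem_closedNbhd_inl y) (inr_mem_closedNbhd_inl y)

lemma closedNbhd_join_inr_eq_inr {u v : W} :
    closedNbhd (joinGraph G H) (Sum.inr u) = closedNbhd (joinGraph G H) (Sum.inr v) ↔
      closedNbhd H u = closedNbhd H v := by
  constructor
  · intro h; ext x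
    rw [← inr_mem_closedNbhd_inr (G := G), h, inr_mem_closedNbhd_inr]
  · intro h; ext (x | y)
    · exact iff_of_true (inl_mem_closedNbhd_inr x) (inl_mem_closedNbhd_inr x)
    · rw [inr_mem_closedNbhd_inr, h, ← inr_mem_closedNbhd_inr (G := G)]

lemma closedNbhd_join_inl_eq_inr {u : V} {v : W} :
    closedNbhd (joinGraph G H) (Sum.inl u) = closedNbhd (joinGraph G H) (Sum.inr v) ↔
      closedNbhd G u = Set.univ ∧ closedNbhd H v = Set.univ := by
  constructor
  · intro h
    constructor
    · ext x; simp only [Set.mem_univ, iff_true]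
      exact inl_mem_closedNbhd_inl.mp (h ▸ inl_mem_closedNbhd_inr x)
    · ext y; simp only [Set.mem_univ, iff_true]
      exact inr_mem_closedNbhd_inr.mp (h ▸ inr_mem_closedNbhd_inl (u := u) y)
  · rintro ⟨h1, h2⟩
    ext (x | y)
    · exact iff_of_true (inl_mem_closedNbhd_inl.mpr (h1 ▸ Set.mem_univ x))
        (inl_mem_closedNbhd_inr x)
    · exact iff_of_true (inr_mem_closedNbhd_inl y)
        (inr_mem_closedNbhd_inr.mpr (h2 ▸ Set.mem_univ y))

end Aux3
section Aux4

variable {V W : Type*} {G : SimpleGraph V} {H : SimpleGraph W}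

lemma tfc_insert [DecidableEq V] {c : V} (hc : closedNbhd G c = Set.univ)
    {X : Finset V} (hX : IsTwinFreeClique G X)
    (hfree : ∀ u ∈ X, closedNbhd G u ≠ Set.univ) :
    IsTwinFreeClique G (insert c X) ∧ (insert c X).card = X.card + 1 := by
  have hcX : c ∉ X := fun h => hfree c h hc
  have hc' := closedNbhd_eq_univ_iff.mp hc
  refine ⟨⟨?_, ?_⟩, Finset.card_insert_of_notMem hcX⟩
  · rw [Finset.coe_insert]
    intro a ha b hb hne
    rcases Set.mem_insert_iff.mp ha with rfl | ha'
    · rcases Set.mem_insert_iff.mp hb with rfl | hb'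
      · exact absurd rfl hne
      · exact hc' b (Ne.symm hne)
    · rcases Set.mem_insert_iff.mp hb with rfl | hb'
      · exact (hc' a hne).symm
      · exact hX.1 ha' hb' hne
  · intro u hu v hv hne
    rcases Finset.mem_insert.mp hu with rfl | hu'
    · rcases Finset.mem_insert.mp hv with rfl | hv'
      · exact absurd rfl hne
      · exact fun h => hfree v hv' (h.symm.trans hc)
    · rcases Finset.mem_insert.mp hv with rfl | hv'
      · exact fun h => hfree u hu' (h.trans hc)
      · exact hX.2 u hu' v hv' hne

lemma tfc_subset {X Y : Finset V} (h : X ⊆ Y) (hY : IsTwinFreeClique G Y) :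
    IsTwinFreeClique G X :=
  ⟨fun a ha b hb hne => hY.1 (Finset.mem_coe.mpr (h (Finset.mem_coe.mp ha)))
      (Finset.mem_coe.mpr (h (Finset.mem_coe.mp hb))) hne,
    fun u hu v hv hne => hY.2 u (h hu) v (h hv) hne⟩

lemma tfc_join [Fintype V] [Fintype W] (G : SimpleGraph V) (H : SimpleGraph W)
    {c₁ : V} (hc₁ : closedNbhd G c₁ = Set.univ)
    {c₂ : W} (hc₂ : closedNbhd H c₂ = Set.univ) :
    twinFreeCliqueNum (joinGraph G H) =
      twinFreeCliqueNum G + twinFreeCliqueNum H - 1 := by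
  classical
  have hmemG : twinFreeCliqueNum G ∈ {k | ∃ X : Finset V, IsTwinFreeClique G X ∧ X.card = k} :=
    Nat.sSup_mem ⟨1, {c₁}, tfc_singleton c₁, Finset.card_singleton c₁⟩ (tfc_bddAbove G)
  have hmemH : twinFreeCliqueNum H ∈ {k | ∃ X : Finset W, IsTwinFreeClique H X ∧ X.card = k} :=
    Nat.sSup_mem ⟨1, {c₂}, tfc_singleton c₂, Finset.card_singleton c₂⟩ (tfc_bddAbove H)
  have hmemJ : twinFreeCliqueNum (joinGraph G H) ∈
      {k | ∃ X : Finset (V ⊕ W), IsTwinFreeClique (joinGraph G H) X ∧ X.card = k} :=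
    Nat.sSup_mem ⟨1, {Sum.inl c₁}, tfc_singleton _, Finset.card_singleton _⟩
      (tfc_bddAbove (joinGraph G H))
  set t₁ := twinFreeCliqueNum G with ht₁
  set t₂ := twinFreeCliqueNum H with ht₂
  have t₁pos : 1 ≤ t₁ := le_tfc G (tfc_singleton c₁) (Finset.card_singleton c₁)
  have t₂pos : 1 ≤ t₂ := le_tfc H (tfc_singleton c₂) (Finset.card_singleton c₂)
  -- upper bound for any TFC of the join
  have hub : ∀ X : Finset (V ⊕ W), IsTwinFreeClique (joinGraph G H) X →
      X.card ≤ t₁ + t₂ - 1 := by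
    intro X hX
    have hL : IsTwinFreeClique G X.toLeft := by
      constructor
      · intro a ha b hb hne
        exact hX.1 (Finset.mem_coe.mpr (Finset.mem_toLeft.mp (Finset.mem_coe.mp ha)))
          (Finset.mem_coe.mpr (Finset.mem_toLeft.mp (Finset.mem_coe.mp hb)))
          (fun h => hne (Sum.inl_injective h))
      · intro a ha b hb hne h
        exact hX.2 (Sum.inl a) (Finset.mem_toLeft.mp ha) (Sum.inl b)
          (Finset.mem_toLeft.mp hb) (fun h' => hne (Sum.inl_injective h'))
          (closedNbhd_join_inl_eq_inl.mpr h)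
    have hR : IsTwinFreeClique H X.toRight := by
      constructor
      · intro a ha b hb hne
        exact hX.1 (Finset.mem_coe.mpr (Finset.mem_toRight.mp (Finset.mem_coe.mp ha)))
          (Finset.mem_coe.mpr (Finset.mem_toRight.mp (Finset.mem_coe.mp hb)))
          (fun h => hne (Sum.inr_injective h))
      · intro a ha b hb hne h
        exact hX.2 (Sum.inr a) (Finset.mem_toRight.mp ha) (Sum.inr b)
          (Finset.mem_toRight.mp hb) (fun h' => hne (Sum.inr_injective h'))
          (closedNbhd_join_inr_eq_inr.mpr h)
    have hcards : X.toLeft.card + X.toRight.card = X.card :=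
      Finset.card_toLeft_add_card_toRight
    by_cases hdom : ∃ u ∈ X.toLeft, closedNbhd G u = Set.univ
    · obtain ⟨u, huL, hu⟩ := hdom
      have hfree : ∀ w ∈ X.toRight, closedNbhd H w ≠ Set.univ := by
        intro w hw hwu
        exact hX.2 (Sum.inl u) (Finset.mem_toLeft.mp huL) (Sum.inr w)
          (Finset.mem_toRight.mp hw) Sum.inl_ne_inr
          (closedNbhd_join_inl_eq_inr.mpr ⟨hu, hwu⟩)
      have h1 : X.toLeft.card ≤ t₁ := le_tfc G hL rfl
      obtain ⟨htfc, hcard⟩ := tfc_insert hc₂ hR hfree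
      have h2 : X.toRight.card + 1 ≤ t₂ := hcard ▸ le_tfc H htfc rfl
      omega
    · push_neg at hdom
      obtain ⟨htfc, hcard⟩ := tfc_insert hc₁ hL hdom
      have h1 : X.toLeft.card + 1 ≤ t₁ := hcard ▸ le_tfc G htfc rfl
      have h2 : X.toRight.card ≤ t₂ := le_tfc H hR rfl
      omega
  -- lower bound: construct a TFC of size t₁ + t₂ - 1
  obtain ⟨X₁, hX₁, hX₁c⟩ := hmemG
  obtain ⟨X₂, hX₂, hX₂c⟩ := hmemH
  have hdom₂ : ∃ v ∈ X₂, closedNbhd H v = Set.univ := by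
    by_contra hfree
    push_neg at hfree
    obtain ⟨htfc, hcard⟩ := tfc_insert hc₂ hX₂ hfree
    have h := le_tfc H htfc rfl
    rw [hcard, hX₂c] at h
    rw [← ht₂] at h
    omega
  obtain ⟨v, hvX, hv⟩ := hdom₂
  have hX₂' : IsTwinFreeClique H (X₂.erase v) := tfc_subset (Finset.erase_subset _ _) hX₂
  have hfree' : ∀ w ∈ X₂.erase v, closedNbhd H w ≠ Set.univ := by
    intro w hw hwu
    exact hX₂.2 w (Finset.mem_of_mem_erase hw) v hvX (Finset.mem_erase.mp hw).1
      (hwu.trans hv.symm)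
  have hXJ : IsTwinFreeClique (joinGraph G H) (X₁.disjSum (X₂.erase v)) := by
    constructor
    · rintro (a | a) ha (b | b) hb hne
      · exact hX₁.1
          (Finset.mem_coe.mpr (Finset.inl_mem_disjSum.mp (Finset.mem_coe.mp ha)))
          (Finset.mem_coe.mpr (Finset.inl_mem_disjSum.mp (Finset.mem_coe.mp hb)))
          (fun h => hne (congrArg Sum.inl h))
      · trivial
      · trivial
      · exact hX₂'.1
          (Finset.mem_coe.mpr (Finset.inr_mem_disjSum.mp (Finset.mem_coe.mp ha)))
          (Finset.mem_coe.mpr (Finset.inr_mem_disjSum.mp (Finset.mem_coe.mp hb)))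
          (fun h => hne (congrArg Sum.inr h))
    · rintro (a | a) ha (b | b) hb hne heq
      · exact hX₁.2 a (Finset.inl_mem_disjSum.mp ha) b (Finset.inl_mem_disjSum.mp hb)
          (fun h => hne (congrArg Sum.inl h)) (closedNbhd_join_inl_eq_inl.mp heq)
      · exact hfree' b (Finset.inr_mem_disjSum.mp hb)
          (closedNbhd_join_inl_eq_inr.mp heq).2
      · exact hfree' a (Finset.inr_mem_disjSum.mp ha)
          (closedNbhd_join_inl_eq_inr.mp heq.symm).2
      · exact hX₂'.2 a (Finset.inr_mem_disjSum.mp ha) b (Finset.inr_mem_disjSum.mp hb)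
          (fun h => hne (congrArg Sum.inr h)) (closedNbhd_join_inr_eq_inr.mp heq)
  have hcardJ : (X₁.disjSum (X₂.erase v)).card = t₁ + t₂ - 1 := by
    rw [Finset.card_disjSum, hX₁c, Finset.card_erase_of_mem hvX, hX₂c]
    omega
  have hge : t₁ + t₂ - 1 ≤ twinFreeCliqueNum (joinGraph G H) :=
    le_tfc (joinGraph G H) hXJ hcardJ
  have hle : twinFreeCliqueNum (joinGraph G H) ≤ t₁ + t₂ - 1 := by
    obtain ⟨X, hX, hXc⟩ := hmemJ
    rw [← hXc]
    exact hub X hX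
  omega

end Aux4
/-- If `G`, `H` are connected graphs of order `n₁, n₂ ≥ 2` with maximum
degrees `Δ₁ = n₁ − 1` and `Δ₂ = n₂ − 1`, then
`dim_s(G + H) = dim_s(G) + dim_s(H) + 1`. -/
theorem strongDim_join_of_dominant {V W : Type*} [Fintype V] [Fintype W]
    (G : SimpleGraph V) (H : SimpleGraph W) [DecidableRel G.Adj] [DecidableRel H.Adj]
    (hG : G.Connected) (hH : H.Connected)
    (hn1 : 2 ≤ Fintype.card V) (hn2 : 2 ≤ Fintype.card W)
    (hd1 : G.maxDegree = Fintype.card V - 1) (hd2 : H.maxDegree = Fintype.card W - 1) :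
    strongDim (joinGraph G H) = strongDim G + strongDim H + 1 := by
  classical
  have hnV : Nonempty V := Fintype.card_pos_iff.mp (by omega)
  have hnW : Nonempty W := Fintype.card_pos_iff.mp (by omega)
  obtain ⟨c₁, hc₁'⟩ := exists_dom G (by omega) hd1
  obtain ⟨c₂, hc₂'⟩ := exists_dom H (by omega) hd2
  have hc₁ : closedNbhd G c₁ = Set.univ := closedNbhd_eq_univ_iff.mpr hc₁'
  have hc₂ : closedNbhd H c₂ = Set.univ := closedNbhd_eq_univ_iff.mpr hc₂'
  have e1 := strongDim_add_tfc G hG (dist_le_two_of_dom G hc₁')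
  have e2 := strongDim_add_tfc H hH (dist_le_two_of_dom H hc₂')
  have e3 := strongDim_add_tfc (joinGraph G H) join_connected
    (join_dist_le_two (G := G) (H := H))
  rw [Fintype.card_sum] at e3
  have e4 := tfc_join G H hc₁ hc₂
  have t₁pos : 1 ≤ twinFreeCliqueNum G := le_tfc G (tfc_singleton c₁) (Finset.card_singleton c₁)
  have t₂pos : 1 ≤ twinFreeCliqueNum H := le_tfc H (tfc_singleton c₂) (Finset.card_singleton c₂)
  have t₁le : twinFreeCliqueNum G ≤ Fintype.card V := tfc_le_card G
  have t₂le : twinFreeCliqueNum H ≤ Fintype.card W := tfc_le_card H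
  omega
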